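/- For every positive integer h there exists a planar bipartite adjacency instance (modeling external adjacencies between two rectangle complexes) with 4h+6 external adjacency edges such that every valid selection—i.e., every choice of an independent set in each of the two internal-adjacency outerplanar graphs—preserves at most h+6 external adjacency edges; hence at most a (1/4 + o(1)) fraction of external adjacencies can be preserved. -/

import Mathlib

open scoped BigOperators

/-- A graph is outerplanar iff it can be drawn with all vertices placed (injectively) on the
unit circle and edges drawn as pairwise non-crossing chords: two chords of distinct edges
never meet in a point interior to both. -/
def IsOuterplanar {V : Type} (G : SimpleGraph V) : Prop :=
  ∃ pos : V → EuclideanSpace ℝ (Fin 2),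
    Function.Injective pos ∧ (∀ v : V, ‖pos v‖ = 1) ∧
    ∀ a b c d : V, G.Adj a b → G.Adj c d → ({a, b} : Set V) ≠ {c, d} →
      openSegment ℝ (pos a) (pos b) ∩ openSegment ℝ (pos c) (pos d) = ∅

/-- A maximal outerplanar graph: outerplanar, and no edge can be added while keeping the
graph outerplanar. -/
def IsMaximalOuterplanar {V : Type} (G : SimpleGraph V) : Prop :=
  IsOuterplanar G ∧ ∀ H : SimpleGraph V, G ≤ H → G ≠ H → ¬ IsOuterplanar H

/-- An independent set of a graph. -/
def IsIndepSet {V : Type} (G : SimpleGraph V) (I : Finset V) : Prop :=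
  ∀ i ∈ I, ∀ j ∈ I, ¬ G.Adj i j

/-- A graph is planar iff it has a straight-line drawing: vertices at distinct points of the
plane, edges drawn as segments, two distinct edges never crossing in a point interior to
both, and no vertex interior to an edge.  (By Fáry's theorem this characterizes planarity.) -/
def IsPlanarSL {V : Type} (G : SimpleGraph V) : Prop :=
  ∃ pos : V → EuclideanSpace ℝ (Fin 2), Function.Injective pos ∧
    (∀ a b c d : V, G.Adj a b → G.Adj c d → ({a, b} : Set V) ≠ {c, d} →
      openSegment ℝ (pos a) (pos b) ∩ openSegment ℝ (pos c) (pos d) = ∅) ∧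
    (∀ a b v : V, G.Adj a b → pos v ∉ openSegment ℝ (pos a) (pos b))

/-- The combined adjacency graph of an instance: the two internal adjacency graphs together
with the bipartite external adjacency edges. -/
def combinedGraph {α β : Type} [DecidableEq α] [DecidableEq β]
    (GT : SimpleGraph α) (GB : SimpleGraph β) (E : Finset (α × β)) :
    SimpleGraph (α ⊕ β) :=
  SimpleGraph.fromRel (fun u v =>
    match u, v with
    | .inl a, .inl a' => GT.Adj a a'
    | .inr b, .inr b' => GB.Adj b b'
    | .inl a, .inr b => (a, b) ∈ E
    | .inr _, .inl _ => False)

noncomputable abbrev E2 := EuclideanSpace ℝ (Fin 2)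
noncomputable def pt (x y : ℝ) : E2 := WithLp.toLp 2 ![x, y]
lemma pt_inj {x y x' y' : ℝ} (h : pt x y = pt x' y') : x = x' ∧ y = y' :=
  ⟨congrArg (fun v : E2 => v 0) h, congrArg (fun v : E2 => v 1) h⟩
lemma norm_pt (x y : ℝ) : ‖pt x y‖ = Real.sqrt (x^2 + y^2) := by
  rw [EuclideanSpace.norm_eq]
  simp [pt, Fin.sum_univ_two, sq_abs]
lemma norm_pt_one {x y : ℝ} (hxy : x^2 + y^2 = 1) : ‖pt x y‖ = 1 := by
  rw [norm_pt, hxy, Real.sqrt_one]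

/-- x-coordinate of the rational circle parametrization. -/
noncomputable def cX (n : ℕ) : ℝ := (1 - (n:ℝ)^2) / (1 + (n:ℝ)^2)
noncomputable def cY (n : ℕ) : ℝ := 2 * (n:ℝ) / (1 + (n:ℝ)^2)

lemma one_add_sq_pos (n : ℕ) : (0:ℝ) < 1 + (n:ℝ)^2 := by positivity

lemma cXY_norm (n : ℕ) : (cX n)^2 + (cY n)^2 = 1 := by
  have h := (one_add_sq_pos n).ne'
  rw [cX, cY, div_pow, div_pow, ← add_div, div_eq_one_iff_eq (pow_ne_zero 2 h)]
  ring

lemma cX_lt {s t : ℕ} (hst : s < t) : cX t < cX s := by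
  rw [cX, cX, div_lt_div_iff₀ (one_add_sq_pos t) (one_add_sq_pos s)]
  have : (s:ℝ) < t := by exact_mod_cast hst
  have hs : (0:ℝ) ≤ s := Nat.cast_nonneg s
  nlinarith

lemma cpos_inj {s t : ℕ} (h : pt (cX s) (cY s) = pt (cX t) (cY t)) : s = t := by
  obtain ⟨h1, h2⟩ := pt_inj h
  rcases lt_trichotomy s t with hc | hc | hc
  · exact absurd h1.symm (cX_lt hc).ne
  · exact hc
  · exact absurd h1 (cX_lt hc).ne

noncomputable def L (α β γ : ℝ) (v : E2) : ℝ := α * v 0 + β * v 1 + γ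
lemma L_pt (α β γ x y : ℝ) : L α β γ (pt x y) = α * x + β * y + γ := rfl
lemma L_seg {a b x : E2} (α β γ : ℝ) (hx : x ∈ openSegment ℝ a b) :
    ∃ s t : ℝ, 0 < s ∧ 0 < t ∧ s + t = 1 ∧
      L α β γ x = s * L α β γ a + t * L α β γ b := by
  obtain ⟨s, t, hs, ht, hst, rfl⟩ := hx
  refine ⟨s, t, hs, ht, hst, ?_⟩
  simp only [L, PiLp.add_apply, PiLp.smul_apply, smul_eq_mul]
  linear_combination γ * hst.symm
lemma seg_sep {a b c d : E2} (α β γ : ℝ)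
    (ha : L α β γ a ≤ 0) (hb : L α β γ b ≤ 0) (hab : L α β γ a + L α β γ b < 0)
    (hc : 0 ≤ L α β γ c) (hd : 0 ≤ L α β γ d) :
    openSegment ℝ a b ∩ openSegment ℝ c d = ∅ := by
  ext x
  simp only [Set.mem_inter_iff, Set.mem_empty_iff_false, iff_false, not_and]
  intro h1 h2
  obtain ⟨s, t, hs, ht, hst, hL1⟩ := L_seg α β γ h1
  obtain ⟨s', t', hs', ht', hst', hL2⟩ := L_seg α β γ h2
  nlinarith [mul_nonneg hs.le (neg_nonneg.2 ha), mul_nonneg ht.le (neg_nonneg.2 hb),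
    mul_nonneg hs'.le hc, mul_nonneg ht'.le hd, mul_pos hs ht]

lemma cX_le {s t : ℕ} (hst : s ≤ t) : cX t ≤ cX s := by
  rcases eq_or_lt_of_le hst with rfl | hlt
  · exact le_refl _
  · exact (cX_lt hlt).le

lemma chord_sep {m n p q : ℕ} (hmp : m < p) (hmq : m < q) (hnp : n < p) (hnq : n < q)
    (hpq : p ≠ q) :
    openSegment ℝ (pt (cX m) (cY m)) (pt (cX n) (cY n)) ∩
      openSegment ℝ (pt (cX p) (cY p)) (pt (cX q) (cY q)) = ∅ := by
  rw [Set.inter_comm]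
  refine seg_sep 1 0 (-(cX (min p q))) ?_ ?_ ?_ ?_ ?_ <;> simp only [L_pt]
  · have := cX_le (min_le_left p q); linarith
  · have := cX_le (min_le_right p q); linarith
  · rcases le_or_gt p q with hle | hlt
    · have h1 : min p q = p := min_eq_left hle
      have := cX_lt (lt_of_le_of_ne hle hpq)
      rw [h1]; linarith
    · have h1 : min p q = q := min_eq_right hlt.le
      have := cX_lt hlt
      rw [h1]; linarith
  · have := cX_lt (show m < min p q from lt_min hmp hmq); linarith
  · have := cX_lt (show n < min p q from lt_min hnp hnq); linarith
lemma pt0 (x y : ℝ) : pt x y 0 = x := rfl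
lemma pt1 (x y : ℝ) : pt x y 1 = y := rfl
lemma notMem1 {a b v : E2} (α β γ : ℝ)
    (hva : L α β γ v < L α β γ a) (hvb : L α β γ v < L α β γ b) :
    v ∉ openSegment ℝ a b := by
  intro hv
  obtain ⟨s, t, hs, ht, hst, hL⟩ := L_seg α β γ hv
  have h' : s * L α β γ v + t * L α β γ v = L α β γ v := by
    linear_combination (L α β γ v) * hst
  nlinarith [mul_pos hs (sub_pos.2 hva), mul_pos ht (sub_pos.2 hvb)]

lemma notMem2 {a b v : E2} (α β γ : ℝ)
    (hva : L α β γ v ≤ L α β γ a) (hab : L α β γ a < L α β γ b) :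
    v ∉ openSegment ℝ a b := by
  intro hv
  obtain ⟨s, t, hs, ht, hst, hL⟩ := L_seg α β γ hv
  have h' : s * L α β γ a + t * L α β γ a = L α β γ a := by
    linear_combination (L α β γ a) * hst
  nlinarith [mul_pos ht (sub_pos.2 hab), mul_nonneg hs.le (sub_nonneg.2 hva)]

lemma notMem3 {a b v : E2} (α β γ : ℝ)
    (hab : L α β γ a < L α β γ b) (hbv : L α β γ b ≤ L α β γ v) :
    v ∉ openSegment ℝ a b := by
  intro hv
  obtain ⟨s, t, hs, ht, hst, hL⟩ := L_seg α β γ hv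
  have h' : s * L α β γ b + t * L α β γ b = L α β γ b := by
    linear_combination (L α β γ b) * hst
  nlinarith [mul_pos hs (sub_pos.2 hab), mul_nonneg ht.le (sub_nonneg.2 <| le_refl (L α β γ b))]

lemma notMem2' {a b v : E2} (α β γ : ℝ)
    (hva : L α β γ v ≤ L α β γ b) (hab : L α β γ b < L α β γ a) :
    v ∉ openSegment ℝ a b := by
  rw [openSegment_symm]; exact notMem2 α β γ hva hab

lemma notMem3' {a b v : E2} (α β γ : ℝ)
    (hab : L α β γ b < L α β γ a) (hbv : L α β γ a ≤ L α β γ v) :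
    v ∉ openSegment ℝ a b := by
  rw [openSegment_symm]; exact notMem3 α β γ hab hbv

def GTdef : SimpleGraph (Fin 7) := SimpleGraph.fromRel (fun a b => a = 0 ∧ b = 1)
def GBdef (h : ℕ) : SimpleGraph (Fin (4*h)) :=
  SimpleGraph.fromRel (fun i j => (i:ℕ)/2 = (j:ℕ)/2)

lemma GT_adj {a b : Fin 7} : GTdef.Adj a b ↔ a ≠ b ∧ ((a = 0 ∧ b = 1) ∨ (b = 0 ∧ a = 1)) := by
  simp [GTdef, SimpleGraph.fromRel_adj]

lemma GB_adj {h : ℕ} {a b : Fin (4*h)} : (GBdef h).Adj a b ↔ a ≠ b ∧ (a:ℕ)/2 = (b:ℕ)/2 := by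
  simp only [GBdef, SimpleGraph.fromRel_adj]
  constructor
  · rintro ⟨hne, h' | h'⟩ <;> exact ⟨hne, by omega⟩
  · rintro ⟨hne, h'⟩; exact ⟨hne, Or.inl h'⟩

def Edef (h : ℕ) (hpos : 0 < h) : Finset (Fin 7 × Fin (4*h)) :=
  (Finset.univ.image fun i : Fin (4*h) => ((if (i:ℕ) < 2*h then (0:Fin 7) else 1), i)) ∪
  {(2, ⟨0, by omega⟩), (2, ⟨1, by omega⟩), (2, ⟨2, by omega⟩), (2, ⟨3, by omega⟩),
   (3, ⟨0, by omega⟩), (3, ⟨1, by omega⟩)}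

lemma mem_Edef {h : ℕ} {hpos : 0 < h} {a : Fin 7} {b : Fin (4*h)} :
    (a, b) ∈ Edef h hpos ↔
      (a = 0 ∧ (b:ℕ) < 2*h) ∨ (a = 1 ∧ 2*h ≤ (b:ℕ)) ∨
      (a = 2 ∧ (b:ℕ) < 4) ∨ (a = 3 ∧ (b:ℕ) < 2) := by
  simp only [Edef, Finset.mem_union, Finset.mem_image, Finset.mem_univ, true_and,
    Finset.mem_insert, Finset.mem_singleton, Prod.mk.injEq]
  constructor
  · rintro (⟨i, hi1, rfl⟩ | ⟨rfl, rfl⟩ | ⟨rfl, rfl⟩ | ⟨rfl, rfl⟩ | ⟨rfl, rfl⟩ | ⟨rfl, rfl⟩ |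
      ⟨rfl, rfl⟩)
    · by_cases hc : (i:ℕ) < 2*h
      · rw [if_pos hc] at hi1; left; exact ⟨hi1.symm, hc⟩
      · rw [if_neg hc] at hi1; right; left; exact ⟨hi1.symm, by omega⟩
    · exact Or.inr <| Or.inr <| Or.inl ⟨rfl, by norm_num⟩
    · exact Or.inr <| Or.inr <| Or.inl ⟨rfl, by norm_num⟩
    · exact Or.inr <| Or.inr <| Or.inl ⟨rfl, by norm_num⟩
    · exact Or.inr <| Or.inr <| Or.inl ⟨rfl, by norm_num⟩
    · exact Or.inr <| Or.inr <| Or.inr ⟨rfl, by norm_num⟩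
    · exact Or.inr <| Or.inr <| Or.inr ⟨rfl, by norm_num⟩
  · rintro (⟨rfl, hb⟩ | ⟨rfl, hb⟩ | ⟨rfl, hb⟩ | ⟨rfl, hb⟩)
    · exact Or.inl ⟨b, if_pos hb, rfl⟩
    · exact Or.inl ⟨b, if_neg (by omega), rfl⟩
    · right
      have : (b:ℕ) = 0 ∨ (b:ℕ) = 1 ∨ (b:ℕ) = 2 ∨ (b:ℕ) = 3 := by omega
      rcases this with hb' | hb' | hb' | hb'
      · exact Or.inl ⟨rfl, Fin.ext hb'⟩
      · exact Or.inr <| Or.inl ⟨rfl, Fin.ext hb'⟩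
      · exact Or.inr <| Or.inr <| Or.inl ⟨rfl, Fin.ext hb'⟩
      · exact Or.inr <| Or.inr <| Or.inr <| Or.inl ⟨rfl, Fin.ext hb'⟩
    · right; right; right; right; right
      have : (b:ℕ) = 0 ∨ (b:ℕ) = 1 := by omega
      rcases this with hb' | hb'
      · exact Or.inl ⟨rfl, Fin.ext hb'⟩
      · exact Or.inr ⟨rfl, Fin.ext hb'⟩

noncomputable def cpos : Fin 7 → E2
  | 0 => pt 1 0
  | 1 => pt 0 1
  | 2 => pt (-1) 0
  | 3 => pt 0 (-1)
  | 4 => pt (3/5) (4/5)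
  | 5 => pt (4/5) (3/5)
  | 6 => pt (-3/5) (4/5)

lemma GT_outer : IsOuterplanar GTdef := by
  refine ⟨cpos, ?_, ?_, ?_⟩
  · intro u v huv
    fin_cases u <;> fin_cases v <;> first
      | rfl
      | (exfalso; obtain ⟨h1, h2⟩ := pt_inj huv; revert h1 h2; norm_num)
  · intro v; fin_cases v <;> exact norm_pt_one (by norm_num)
  · intro a b c d hab hcd hne
    exfalso; apply hne
    obtain ⟨-, hab⟩ := GT_adj.mp hab
    obtain ⟨-, hcd⟩ := GT_adj.mp hcd
    rcases hab with ⟨rfl, rfl⟩ | ⟨rfl, rfl⟩ <;> rcases hcd with ⟨rfl, rfl⟩ | ⟨rfl, rfl⟩ <;>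
      simp [Set.pair_comm]

lemma GB_outer (h : ℕ) : IsOuterplanar (GBdef h) := by
  refine ⟨fun i => pt (cX i) (cY i), ?_, fun v => norm_pt_one (cXY_norm _), ?_⟩
  · intro u v huv
    exact Fin.ext (cpos_inj huv)
  · intro a b c d hab hcd hne
    obtain ⟨hab1, hab2⟩ := GB_adj.mp hab
    obtain ⟨hcd1, hcd2⟩ := GB_adj.mp hcd
    have hab1' : (a:ℕ) ≠ b := fun he => hab1 (Fin.ext he)
    have hcd1' : (c:ℕ) ≠ d := fun he => hcd1 (Fin.ext he)
    by_cases hk : (a:ℕ)/2 = (c:ℕ)/2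
    · exfalso; apply hne
      have : ((a:ℕ) = c ∧ (b:ℕ) = d) ∨ ((a:ℕ) = d ∧ (b:ℕ) = c) := by omega
      rcases this with ⟨h1, h2⟩ | ⟨h1, h2⟩
      · rw [Fin.ext h1, Fin.ext h2]
      · rw [Fin.ext h1, Fin.ext h2, Set.pair_comm]
    · rcases lt_or_gt_of_ne hk with hlt | hlt
      · exact chord_sep (by omega) (by omega) (by omega) (by omega) (by omega)
      · rw [Set.inter_comm]
        exact chord_sep (by omega) (by omega) (by omega) (by omega) (by omega)
noncomputable def tpos (h : ℕ) : Fin 7 → E2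
  | 0 => pt ((h:ℝ) - 1/2) 1
  | 1 => pt (3*(h:ℝ) - 1/2) 1
  | 2 => pt (1/2) (-3)
  | 3 => pt (1/2) (-1)
  | 4 => pt 0 2
  | 5 => pt 1 2
  | 6 => pt 2 2

noncomputable def posC (h : ℕ) : Fin 7 ⊕ Fin (4*h) → E2 :=
  Sum.elim (tpos h) (fun i => pt ((i:ℕ):ℝ) 0)

def Q (h : ℕ) (u v : Fin 7 ⊕ Fin (4*h)) : Prop :=
  (u = .inl 0 ∧ v = .inl 1)
  ∨ (∃ i j : Fin (4*h), u = .inr i ∧ v = .inr j ∧ (i:ℕ) < (j:ℕ) ∧ (i:ℕ)/2 = (j:ℕ)/2)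
  ∨ (∃ i : Fin (4*h), u = .inl 0 ∧ v = .inr i ∧ (i:ℕ) < 2*h)
  ∨ (∃ i : Fin (4*h), u = .inl 1 ∧ v = .inr i ∧ 2*h ≤ (i:ℕ))
  ∨ (∃ i : Fin (4*h), u = .inl 2 ∧ v = .inr i ∧ (i:ℕ) < 4)
  ∨ (∃ i : Fin (4*h), u = .inl 3 ∧ v = .inr i ∧ (i:ℕ) < 2)

lemma adj_cases {h : ℕ} {hpos : 0 < h} {u v : Fin 7 ⊕ Fin (4*h)}
    (hadj : (combinedGraph GTdef (GBdef h) (Edef h hpos)).Adj u v) :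
    Q h u v ∨ Q h v u := by
  rw [combinedGraph, SimpleGraph.fromRel_adj] at hadj
  obtain ⟨hne, hrel⟩ := hadj
  rcases u with a | i <;> rcases v with a' | i'
  · have hGT : GTdef.Adj a a' := by
      rcases hrel with h' | h'
      · exact h'
      · exact h'.symm
    obtain ⟨-, h'⟩ := GT_adj.mp hGT
    rcases h' with ⟨rfl, rfl⟩ | ⟨rfl, rfl⟩
    · exact Or.inl (Or.inl ⟨rfl, rfl⟩)
    · exact Or.inr (Or.inl ⟨rfl, rfl⟩)
  · -- inl a, inr i'
    have hE : (a, i') ∈ Edef h hpos := by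
      rcases hrel with h' | h'
      · exact h'
      · exact h'.elim
    rcases mem_Edef.mp hE with ⟨rfl, hb⟩ | ⟨rfl, hb⟩ | ⟨rfl, hb⟩ | ⟨rfl, hb⟩
    · exact Or.inl <| Or.inr <| Or.inr <| Or.inl ⟨i', rfl, rfl, hb⟩
    · exact Or.inl <| Or.inr <| Or.inr <| Or.inr <| Or.inl ⟨i', rfl, rfl, hb⟩
    · exact Or.inl <| Or.inr <| Or.inr <| Or.inr <| Or.inr <| Or.inl ⟨i', rfl, rfl, hb⟩
    · exact Or.inl <| Or.inr <| Or.inr <| Or.inr <| Or.inr <| Or.inr ⟨i', rfl, rfl, hb⟩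
  · -- inr i, inl a'
    have hE : (a', i) ∈ Edef h hpos := by
      rcases hrel with h' | h'
      · exact h'.elim
      · exact h'
    rcases mem_Edef.mp hE with ⟨rfl, hb⟩ | ⟨rfl, hb⟩ | ⟨rfl, hb⟩ | ⟨rfl, hb⟩
    · exact Or.inr <| Or.inr <| Or.inr <| Or.inl ⟨i, rfl, rfl, hb⟩
    · exact Or.inr <| Or.inr <| Or.inr <| Or.inr <| Or.inl ⟨i, rfl, rfl, hb⟩
    · exact Or.inr <| Or.inr <| Or.inr <| Or.inr <| Or.inr <| Or.inl ⟨i, rfl, rfl, hb⟩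
    · exact Or.inr <| Or.inr <| Or.inr <| Or.inr <| Or.inr <| Or.inr ⟨i, rfl, rfl, hb⟩
  · have hGB : (GBdef h).Adj i i' := by
      rcases hrel with h' | h'
      · exact h'
      · exact h'.symm
    obtain ⟨hne', hdiv⟩ := GB_adj.mp hGB
    have : (i:ℕ) ≠ (i':ℕ) := fun he => hne' (Fin.ext he)
    rcases lt_or_gt_of_ne this with hlt | hlt
    · exact Or.inl <| Or.inr <| Or.inl ⟨i, i', rfl, rfl, hlt, hdiv⟩
    · exact Or.inr <| Or.inr <| Or.inl ⟨i', i, rfl, rfl, hlt, hdiv.symm⟩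
section Cross
variable {h : ℕ}

private lemma cast_lt_of {a b : ℕ} (hab : a < b) : ((a:ℕ):ℝ) + 1 ≤ (b:ℝ) := by
  exact_mod_cast hab

set_option maxHeartbeats 4000000 in
lemma cross (hpos : 0 < h) {u v w z : Fin 7 ⊕ Fin (4*h)}
    (h1 : Q h u v) (h2 : Q h w z) (hne : ({u, v} : Set (Fin 7 ⊕ Fin (4*h))) ≠ {w, z}) :
    openSegment ℝ (posC h u) (posC h v) ∩ openSegment ℝ (posC h w) (posC h z) = ∅ := by
  have hh : (1:ℝ) ≤ (h:ℝ) := by exact_mod_cast hpos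
  rcases h1 with ⟨rfl, rfl⟩ | ⟨i, j, rfl, rfl, hij, hij2⟩ | ⟨i, rfl, rfl, hi⟩ |
    ⟨i, rfl, rfl, hi⟩ | ⟨i, rfl, rfl, hi⟩ | ⟨i, rfl, rfl, hi⟩
  -- ===== Case 1 : first edge is T =====
  · rcases h2 with ⟨rfl, rfl⟩ | ⟨m, n, rfl, rfl, hmn, hmn2⟩ | ⟨m, rfl, rfl, hm⟩ |
      ⟨m, rfl, rfl, hm⟩ | ⟨m, rfl, rfl, hm⟩ | ⟨m, rfl, rfl, hm⟩
    · exact absurd rfl hne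
    · rw [Set.inter_comm]
      refine seg_sep 0 1 (-1) ?_ ?_ ?_ ?_ ?_ <;>
        simp only [posC, Sum.elim_inl, Sum.elim_inr, tpos, L_pt] <;> linarith
    · rw [Set.inter_comm]
      refine seg_sep 0 1 (-1) ?_ ?_ ?_ ?_ ?_ <;>
        simp only [posC, Sum.elim_inl, Sum.elim_inr, tpos, L_pt] <;> linarith
    · rw [Set.inter_comm]
      refine seg_sep 0 1 (-1) ?_ ?_ ?_ ?_ ?_ <;>
        simp only [posC, Sum.elim_inl, Sum.elim_inr, tpos, L_pt] <;> linarith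
    · rw [Set.inter_comm]
      refine seg_sep 0 1 0 ?_ ?_ ?_ ?_ ?_ <;>
        simp only [posC, Sum.elim_inl, Sum.elim_inr, tpos, L_pt] <;> linarith
    · rw [Set.inter_comm]
      refine seg_sep 0 1 0 ?_ ?_ ?_ ?_ ?_ <;>
        simp only [posC, Sum.elim_inl, Sum.elim_inr, tpos, L_pt] <;> linarith
  -- ===== Case 2 : first edge is a matching edge (i,j), i<j, i/2=j/2 =====
  · have hj : (j:ℕ) = (i:ℕ) + 1 := by omega
    have hi' : ((i:ℕ):ℝ) + 1 = ((j:ℕ):ℝ) := by exact_mod_cast hj.symm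
    rcases h2 with ⟨rfl, rfl⟩ | ⟨m, n, rfl, rfl, hmn, hmn2⟩ | ⟨m, rfl, rfl, hm⟩ |
      ⟨m, rfl, rfl, hm⟩ | ⟨m, rfl, rfl, hm⟩ | ⟨m, rfl, rfl, hm⟩
    · refine seg_sep 0 1 (-1) ?_ ?_ ?_ ?_ ?_ <;>
        simp only [posC, Sum.elim_inl, Sum.elim_inr, tpos, L_pt] <;> linarith
    · -- matching vs matching
      have hn : (n:ℕ) = (m:ℕ) + 1 := by omega
      have hn' : ((m:ℕ):ℝ) + 1 = ((n:ℕ):ℝ) := by exact_mod_cast hn.symm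
      by_cases hcmp : (i:ℕ) = (m:ℕ)
      · exfalso
        have e1 : i = m := Fin.ext hcmp
        have e2 : j = n := Fin.ext (by omega)
        subst e1; subst e2; exact hne rfl
      · rcases lt_or_gt_of_ne hcmp with hlt | hlt
        · have hm2' : ((i:ℕ):ℝ) + 2 ≤ ((m:ℕ):ℝ) := by
            exact_mod_cast (by omega : (i:ℕ) + 2 ≤ (m:ℕ))
          refine seg_sep 1 0 (-(((i:ℕ):ℝ) + 1)) ?_ ?_ ?_ ?_ ?_ <;>
            simp only [posC, Sum.elim_inl, Sum.elim_inr, tpos, L_pt] <;> linarith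
        · have hm2' : ((m:ℕ):ℝ) + 2 ≤ ((i:ℕ):ℝ) := by
            exact_mod_cast (by omega : (m:ℕ) + 2 ≤ (i:ℕ))
          rw [Set.inter_comm]
          refine seg_sep 1 0 (-(((m:ℕ):ℝ) + 1)) ?_ ?_ ?_ ?_ ?_ <;>
            simp only [posC, Sum.elim_inl, Sum.elim_inr, tpos, L_pt] <;> linarith
    · rw [Set.inter_comm]
      refine seg_sep 0 (-1) 0 ?_ ?_ ?_ ?_ ?_ <;>
        simp only [posC, Sum.elim_inl, Sum.elim_inr, tpos, L_pt] <;> linarith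
    · rw [Set.inter_comm]
      refine seg_sep 0 (-1) 0 ?_ ?_ ?_ ?_ ?_ <;>
        simp only [posC, Sum.elim_inl, Sum.elim_inr, tpos, L_pt] <;> linarith
    · rw [Set.inter_comm]
      refine seg_sep 0 1 0 ?_ ?_ ?_ ?_ ?_ <;>
        simp only [posC, Sum.elim_inl, Sum.elim_inr, tpos, L_pt] <;> linarith
    · rw [Set.inter_comm]
      refine seg_sep 0 1 0 ?_ ?_ ?_ ?_ ?_ <;>
        simp only [posC, Sum.elim_inl, Sum.elim_inr, tpos, L_pt] <;> linarith
  -- ===== Case 3 : first edge is S0(i), i < 2h =====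
  · have hi' : ((i:ℕ):ℝ) + 1 ≤ 2*(h:ℝ) := by exact_mod_cast cast_lt_of hi
    rcases h2 with ⟨rfl, rfl⟩ | ⟨m, n, rfl, rfl, hmn, hmn2⟩ | ⟨m, rfl, rfl, hm⟩ |
      ⟨m, rfl, rfl, hm⟩ | ⟨m, rfl, rfl, hm⟩ | ⟨m, rfl, rfl, hm⟩
    · refine seg_sep 0 1 (-1) ?_ ?_ ?_ ?_ ?_ <;>
        simp only [posC, Sum.elim_inl, Sum.elim_inr, tpos, L_pt] <;> linarith
    · refine seg_sep 0 (-1) 0 ?_ ?_ ?_ ?_ ?_ <;>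
        simp only [posC, Sum.elim_inl, Sum.elim_inr, tpos, L_pt] <;> linarith
    · -- S0 vs S0
      by_cases hcmp : (i:ℕ) = (m:ℕ)
      · exfalso; have e1 : i = m := Fin.ext hcmp; subst e1; exact hne rfl
      · rcases lt_or_gt_of_ne hcmp with hlt | hlt
        · have hlt' : ((i:ℕ):ℝ) < ((m:ℕ):ℝ) := by exact_mod_cast hlt
          refine seg_sep 2 (((i:ℕ):ℝ) + ((m:ℕ):ℝ) - (2*(h:ℝ) - 1))
            (-(((i:ℕ):ℝ) + ((m:ℕ):ℝ))) ?_ ?_ ?_ ?_ ?_ <;>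
            simp only [posC, Sum.elim_inl, Sum.elim_inr, tpos, L_pt] <;> linarith
        · have hlt' : ((m:ℕ):ℝ) < ((i:ℕ):ℝ) := by exact_mod_cast hlt
          rw [Set.inter_comm]
          refine seg_sep 2 (((i:ℕ):ℝ) + ((m:ℕ):ℝ) - (2*(h:ℝ) - 1))
            (-(((i:ℕ):ℝ) + ((m:ℕ):ℝ))) ?_ ?_ ?_ ?_ ?_ <;>
            simp only [posC, Sum.elim_inl, Sum.elim_inr, tpos, L_pt] <;> linarith
    · -- S0 vs S1
      have hm' : 2*(h:ℝ) ≤ ((m:ℕ):ℝ) := by exact_mod_cast hm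
      refine seg_sep 2 0 (1 - 4*(h:ℝ)) ?_ ?_ ?_ ?_ ?_ <;>
        simp only [posC, Sum.elim_inl, Sum.elim_inr, tpos, L_pt] <;> linarith
    · rw [Set.inter_comm]
      refine seg_sep 0 1 0 ?_ ?_ ?_ ?_ ?_ <;>
        simp only [posC, Sum.elim_inl, Sum.elim_inr, tpos, L_pt] <;> linarith
    · rw [Set.inter_comm]
      refine seg_sep 0 1 0 ?_ ?_ ?_ ?_ ?_ <;>
        simp only [posC, Sum.elim_inl, Sum.elim_inr, tpos, L_pt] <;> linarith
  -- ===== Case 4 : first edge is S1(i), 2h ≤ i =====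
  · have hi' : 2*(h:ℝ) ≤ ((i:ℕ):ℝ) := by exact_mod_cast hi
    have hi2 : ((i:ℕ):ℝ) + 1 ≤ 4*(h:ℝ) := by exact_mod_cast cast_lt_of i.isLt
    rcases h2 with ⟨rfl, rfl⟩ | ⟨m, n, rfl, rfl, hmn, hmn2⟩ | ⟨m, rfl, rfl, hm⟩ |
      ⟨m, rfl, rfl, hm⟩ | ⟨m, rfl, rfl, hm⟩ | ⟨m, rfl, rfl, hm⟩
    · refine seg_sep 0 1 (-1) ?_ ?_ ?_ ?_ ?_ <;>
        simp only [posC, Sum.elim_inl, Sum.elim_inr, tpos, L_pt] <;> linarith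
    · refine seg_sep 0 (-1) 0 ?_ ?_ ?_ ?_ ?_ <;>
        simp only [posC, Sum.elim_inl, Sum.elim_inr, tpos, L_pt] <;> linarith
    · -- S1 vs S0
      have hm' : ((m:ℕ):ℝ) + 1 ≤ 2*(h:ℝ) := by exact_mod_cast cast_lt_of hm
      rw [Set.inter_comm]
      refine seg_sep 2 0 (1 - 4*(h:ℝ)) ?_ ?_ ?_ ?_ ?_ <;>
        simp only [posC, Sum.elim_inl, Sum.elim_inr, tpos, L_pt] <;> linarith
    · -- S1 vs S1
      by_cases hcmp : (i:ℕ) = (m:ℕ)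
      · exfalso; have e1 : i = m := Fin.ext hcmp; subst e1; exact hne rfl
      · rcases lt_or_gt_of_ne hcmp with hlt | hlt
        · have hlt' : ((i:ℕ):ℝ) < ((m:ℕ):ℝ) := by exact_mod_cast hlt
          refine seg_sep 2 (((i:ℕ):ℝ) + ((m:ℕ):ℝ) - (6*(h:ℝ) - 1))
            (-(((i:ℕ):ℝ) + ((m:ℕ):ℝ))) ?_ ?_ ?_ ?_ ?_ <;>
            simp only [posC, Sum.elim_inl, Sum.elim_inr, tpos, L_pt] <;> linarith
        · have hlt' : ((m:ℕ):ℝ) < ((i:ℕ):ℝ) := by exact_mod_cast hlt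
          rw [Set.inter_comm]
          refine seg_sep 2 (((i:ℕ):ℝ) + ((m:ℕ):ℝ) - (6*(h:ℝ) - 1))
            (-(((i:ℕ):ℝ) + ((m:ℕ):ℝ))) ?_ ?_ ?_ ?_ ?_ <;>
            simp only [posC, Sum.elim_inl, Sum.elim_inr, tpos, L_pt] <;> linarith
    · rw [Set.inter_comm]
      refine seg_sep 0 1 0 ?_ ?_ ?_ ?_ ?_ <;>
        simp only [posC, Sum.elim_inl, Sum.elim_inr, tpos, L_pt] <;> linarith
    · rw [Set.inter_comm]
      refine seg_sep 0 1 0 ?_ ?_ ?_ ?_ ?_ <;>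
        simp only [posC, Sum.elim_inl, Sum.elim_inr, tpos, L_pt] <;> linarith
  -- ===== Case 5 : first edge is B2(i), i < 4 =====
  · rcases h2 with ⟨rfl, rfl⟩ | ⟨m, n, rfl, rfl, hmn, hmn2⟩ | ⟨m, rfl, rfl, hm⟩ |
      ⟨m, rfl, rfl, hm⟩ | ⟨m, rfl, rfl, hm⟩ | ⟨m, rfl, rfl, hm⟩
    · refine seg_sep 0 1 0 ?_ ?_ ?_ ?_ ?_ <;>
        simp only [posC, Sum.elim_inl, Sum.elim_inr, tpos, L_pt] <;> linarith
    · refine seg_sep 0 1 0 ?_ ?_ ?_ ?_ ?_ <;>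
        simp only [posC, Sum.elim_inl, Sum.elim_inr, tpos, L_pt] <;> linarith
    · refine seg_sep 0 1 0 ?_ ?_ ?_ ?_ ?_ <;>
        simp only [posC, Sum.elim_inl, Sum.elim_inr, tpos, L_pt] <;> linarith
    · refine seg_sep 0 1 0 ?_ ?_ ?_ ?_ ?_ <;>
        simp only [posC, Sum.elim_inl, Sum.elim_inr, tpos, L_pt] <;> linarith
    · -- B2 vs B2
      by_cases hcmp : (i:ℕ) = (m:ℕ)
      · exfalso; have e1 : i = m := Fin.ext hcmp; subst e1; exact hne rfl
      · rcases lt_or_gt_of_ne hcmp with hlt | hlt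
        · have hlt' : ((i:ℕ):ℝ) < ((m:ℕ):ℝ) := by exact_mod_cast hlt
          rw [Set.inter_comm]
          refine seg_sep (-6) (((i:ℕ):ℝ) + ((m:ℕ):ℝ) - 1)
            (3*(((i:ℕ):ℝ) + ((m:ℕ):ℝ))) ?_ ?_ ?_ ?_ ?_ <;>
            simp only [posC, Sum.elim_inl, Sum.elim_inr, tpos, L_pt] <;> linarith
        · have hlt' : ((m:ℕ):ℝ) < ((i:ℕ):ℝ) := by exact_mod_cast hlt
          refine seg_sep (-6) (((i:ℕ):ℝ) + ((m:ℕ):ℝ) - 1)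
            (3*(((i:ℕ):ℝ) + ((m:ℕ):ℝ))) ?_ ?_ ?_ ?_ ?_ <;>
            simp only [posC, Sum.elim_inl, Sum.elim_inr, tpos, L_pt] <;> linarith
    · -- B2(i) vs B3(m) : i<4, m<2
      have hiv : (i:ℕ) = 0 ∨ (i:ℕ) = 1 ∨ (i:ℕ) = 2 ∨ (i:ℕ) = 3 := by omega
      have hmv : (m:ℕ) = 0 ∨ (m:ℕ) = 1 := by omega
      rcases hiv with hiv | hiv | hiv | hiv
      · have e1 : ((i:ℕ):ℝ) = 0 := by rw [hiv]; norm_num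
        rcases hmv with hmv | hmv
        · have e2 : ((m:ℕ):ℝ) = 0 := by rw [hmv]; norm_num
          refine seg_sep 4 1 0 ?_ ?_ ?_ ?_ ?_ <;>
            simp only [posC, Sum.elim_inl, Sum.elim_inr, tpos, L_pt] <;> linarith
        · have e2 : ((m:ℕ):ℝ) = 1 := by rw [hmv]; norm_num
          rw [Set.inter_comm]
          refine seg_sep (-6) (-1) 0 ?_ ?_ ?_ ?_ ?_ <;>
            simp only [posC, Sum.elim_inl, Sum.elim_inr, tpos, L_pt] <;> linarith
      · have e1 : ((i:ℕ):ℝ) = 1 := by rw [hiv]; norm_num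
        rcases hmv with hmv | hmv
        · have e2 : ((m:ℕ):ℝ) = 0 := by rw [hmv]; norm_num
          rw [Set.inter_comm]
          refine seg_sep 6 (-1) (-6) ?_ ?_ ?_ ?_ ?_ <;>
            simp only [posC, Sum.elim_inl, Sum.elim_inr, tpos, L_pt] <;> linarith
        · have e2 : ((m:ℕ):ℝ) = 1 := by rw [hmv]; norm_num
          refine seg_sep (-4) 1 4 ?_ ?_ ?_ ?_ ?_ <;>
            simp only [posC, Sum.elim_inl, Sum.elim_inr, tpos, L_pt] <;> linarith
      · have e1 : ((i:ℕ):ℝ) = 2 := by rw [hiv]; norm_num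
        have e2 : ((m:ℕ):ℝ) = 0 ∨ ((m:ℕ):ℝ) = 1 := by
          rcases hmv with hmv | hmv
          · left; rw [hmv]; norm_num
          · right; rw [hmv]; norm_num
        rw [Set.inter_comm]
        refine seg_sep 2 (-1) (-4) ?_ ?_ ?_ ?_ ?_ <;>
          simp only [posC, Sum.elim_inl, Sum.elim_inr, tpos, L_pt] <;> rcases e2 with e2 | e2 <;>
          linarith
      · have e1 : ((i:ℕ):ℝ) = 3 := by rw [hiv]; norm_num
        have e2 : ((m:ℕ):ℝ) = 0 ∨ ((m:ℕ):ℝ) = 1 := by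
          rcases hmv with hmv | hmv
          · left; rw [hmv]; norm_num
          · right; rw [hmv]; norm_num
        rw [Set.inter_comm]
        refine seg_sep 6 (-5) (-18) ?_ ?_ ?_ ?_ ?_ <;>
          simp only [posC, Sum.elim_inl, Sum.elim_inr, tpos, L_pt] <;> rcases e2 with e2 | e2 <;>
          linarith
  -- ===== Case 6 : first edge is B3(i), i < 2 =====
  · rcases h2 with ⟨rfl, rfl⟩ | ⟨m, n, rfl, rfl, hmn, hmn2⟩ | ⟨m, rfl, rfl, hm⟩ |
      ⟨m, rfl, rfl, hm⟩ | ⟨m, rfl, rfl, hm⟩ | ⟨m, rfl, rfl, hm⟩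
    · refine seg_sep 0 1 0 ?_ ?_ ?_ ?_ ?_ <;>
        simp only [posC, Sum.elim_inl, Sum.elim_inr, tpos, L_pt] <;> linarith
    · refine seg_sep 0 1 0 ?_ ?_ ?_ ?_ ?_ <;>
        simp only [posC, Sum.elim_inl, Sum.elim_inr, tpos, L_pt] <;> linarith
    · refine seg_sep 0 1 0 ?_ ?_ ?_ ?_ ?_ <;>
        simp only [posC, Sum.elim_inl, Sum.elim_inr, tpos, L_pt] <;> linarith
    · refine seg_sep 0 1 0 ?_ ?_ ?_ ?_ ?_ <;>
        simp only [posC, Sum.elim_inl, Sum.elim_inr, tpos, L_pt] <;> linarith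
    · -- B3(i) vs B2(m)
      have hiv : (i:ℕ) = 0 ∨ (i:ℕ) = 1 := by omega
      have hmv : (m:ℕ) = 0 ∨ (m:ℕ) = 1 ∨ (m:ℕ) = 2 ∨ (m:ℕ) = 3 := by omega
      rcases hmv with hmv | hmv | hmv | hmv
      · have e2 : ((m:ℕ):ℝ) = 0 := by rw [hmv]; norm_num
        rcases hiv with hiv | hiv
        · have e1 : ((i:ℕ):ℝ) = 0 := by rw [hiv]; norm_num
          rw [Set.inter_comm]
          refine seg_sep 4 1 0 ?_ ?_ ?_ ?_ ?_ <;>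
            simp only [posC, Sum.elim_inl, Sum.elim_inr, tpos, L_pt] <;> linarith
        · have e1 : ((i:ℕ):ℝ) = 1 := by rw [hiv]; norm_num
          refine seg_sep (-6) (-1) 0 ?_ ?_ ?_ ?_ ?_ <;>
            simp only [posC, Sum.elim_inl, Sum.elim_inr, tpos, L_pt] <;> linarith
      · have e2 : ((m:ℕ):ℝ) = 1 := by rw [hmv]; norm_num
        rcases hiv with hiv | hiv
        · have e1 : ((i:ℕ):ℝ) = 0 := by rw [hiv]; norm_num
          refine seg_sep 6 (-1) (-6) ?_ ?_ ?_ ?_ ?_ <;>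
            simp only [posC, Sum.elim_inl, Sum.elim_inr, tpos, L_pt] <;> linarith
        · have e1 : ((i:ℕ):ℝ) = 1 := by rw [hiv]; norm_num
          rw [Set.inter_comm]
          refine seg_sep (-4) 1 4 ?_ ?_ ?_ ?_ ?_ <;>
            simp only [posC, Sum.elim_inl, Sum.elim_inr, tpos, L_pt] <;> linarith
      · have e2 : ((m:ℕ):ℝ) = 2 := by rw [hmv]; norm_num
        have e1 : ((i:ℕ):ℝ) = 0 ∨ ((i:ℕ):ℝ) = 1 := by
          rcases hiv with hiv | hiv
          · left; rw [hiv]; norm_num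
          · right; rw [hiv]; norm_num
        refine seg_sep 2 (-1) (-4) ?_ ?_ ?_ ?_ ?_ <;>
          simp only [posC, Sum.elim_inl, Sum.elim_inr, tpos, L_pt] <;> rcases e1 with e1 | e1 <;>
          linarith
      · have e2 : ((m:ℕ):ℝ) = 3 := by rw [hmv]; norm_num
        have e1 : ((i:ℕ):ℝ) = 0 ∨ ((i:ℕ):ℝ) = 1 := by
          rcases hiv with hiv | hiv
          · left; rw [hiv]; norm_num
          · right; rw [hiv]; norm_num
        refine seg_sep 6 (-5) (-18) ?_ ?_ ?_ ?_ ?_ <;>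
          simp only [posC, Sum.elim_inl, Sum.elim_inr, tpos, L_pt] <;> rcases e1 with e1 | e1 <;>
          linarith
    · -- B3 vs B3
      by_cases hcmp : (i:ℕ) = (m:ℕ)
      · exfalso; have e1 : i = m := Fin.ext hcmp; subst e1; exact hne rfl
      · have hiv : (i:ℕ) = 0 ∨ (i:ℕ) = 1 := by omega
        have hmv : (m:ℕ) = 0 ∨ (m:ℕ) = 1 := by omega
        rcases hiv with hiv | hiv <;> rcases hmv with hmv | hmv
        · exact absurd (hiv.trans hmv.symm) hcmp
        · have e1 : ((i:ℕ):ℝ) = 0 := by rw [hiv]; norm_num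
          have e2 : ((m:ℕ):ℝ) = 1 := by rw [hmv]; norm_num
          refine seg_sep 2 0 (-1) ?_ ?_ ?_ ?_ ?_ <;>
            simp only [posC, Sum.elim_inl, Sum.elim_inr, tpos, L_pt] <;> linarith
        · have e1 : ((i:ℕ):ℝ) = 1 := by rw [hiv]; norm_num
          have e2 : ((m:ℕ):ℝ) = 0 := by rw [hmv]; norm_num
          rw [Set.inter_comm]
          refine seg_sep 2 0 (-1) ?_ ?_ ?_ ?_ ?_ <;>
            simp only [posC, Sum.elim_inl, Sum.elim_inr, tpos, L_pt] <;> linarith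
        · exact absurd (hiv.trans hmv.symm) hcmp

end Cross

set_option maxHeartbeats 4000000 in
lemma noVertex {h : ℕ} (hpos : 0 < h) {u v : Fin 7 ⊕ Fin (4*h)} (h1 : Q h u v)
    (w : Fin 7 ⊕ Fin (4*h)) : posC h w ∉ openSegment ℝ (posC h u) (posC h v) := by
  have hh : (1:ℝ) ≤ (h:ℝ) := by exact_mod_cast hpos
  rcases h1 with ⟨rfl, rfl⟩ | ⟨i, j, rfl, rfl, hij, hij2⟩ | ⟨i, rfl, rfl, hi⟩ |
    ⟨i, rfl, rfl, hi⟩ | ⟨i, rfl, rfl, hi⟩ | ⟨i, rfl, rfl, hi⟩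
  -- T edge
  · rcases w with t | m
    · fin_cases t
      · refine notMem2 1 0 0 ?_ ?_ <;>
          simp only [posC, Sum.elim_inl, Sum.elim_inr, tpos, L_pt] <;> linarith
      · refine notMem3 1 0 0 ?_ ?_ <;>
          simp only [posC, Sum.elim_inl, Sum.elim_inr, tpos, L_pt] <;> linarith
      · refine notMem1 0 1 0 ?_ ?_ <;>
          simp only [posC, Sum.elim_inl, Sum.elim_inr, tpos, L_pt] <;> linarith
      · refine notMem1 0 1 0 ?_ ?_ <;>
          simp only [posC, Sum.elim_inl, Sum.elim_inr, tpos, L_pt] <;> linarith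
      all_goals refine notMem1 0 (-1) 0 ?_ ?_ <;>
        simp only [posC, Sum.elim_inl, Sum.elim_inr, tpos, L_pt] <;> linarith
    · refine notMem1 0 1 0 ?_ ?_ <;>
        simp only [posC, Sum.elim_inl, Sum.elim_inr, tpos, L_pt] <;> linarith
  -- M edge
  · have hj : (j:ℕ) = (i:ℕ) + 1 := by omega
    have hj' : ((i:ℕ):ℝ) + 1 = ((j:ℕ):ℝ) := by exact_mod_cast hj.symm
    rcases w with t | m
    · fin_cases t
      · refine notMem1 0 (-1) 0 ?_ ?_ <;>
          simp only [posC, Sum.elim_inl, Sum.elim_inr, tpos, L_pt] <;> linarith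
      · refine notMem1 0 (-1) 0 ?_ ?_ <;>
          simp only [posC, Sum.elim_inl, Sum.elim_inr, tpos, L_pt] <;> linarith
      · refine notMem1 0 1 0 ?_ ?_ <;>
          simp only [posC, Sum.elim_inl, Sum.elim_inr, tpos, L_pt] <;> linarith
      · refine notMem1 0 1 0 ?_ ?_ <;>
          simp only [posC, Sum.elim_inl, Sum.elim_inr, tpos, L_pt] <;> linarith
      all_goals refine notMem1 0 (-1) 0 ?_ ?_ <;>
        simp only [posC, Sum.elim_inl, Sum.elim_inr, tpos, L_pt] <;> linarith
    · rcases le_or_gt (m:ℕ) (i:ℕ) with hle | hlt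
      · have hle' : ((m:ℕ):ℝ) ≤ ((i:ℕ):ℝ) := by exact_mod_cast hle
        refine notMem2 1 0 0 ?_ ?_ <;>
          simp only [posC, Sum.elim_inl, Sum.elim_inr, tpos, L_pt] <;> linarith
      · have hge : (j:ℕ) ≤ (m:ℕ) := by omega
        have hge' : ((j:ℕ):ℝ) ≤ ((m:ℕ):ℝ) := by exact_mod_cast hge
        refine notMem3 1 0 0 ?_ ?_ <;>
          simp only [posC, Sum.elim_inl, Sum.elim_inr, tpos, L_pt] <;> linarith
  -- S0 edge
  · rcases w with t | m
    · fin_cases t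
      · refine notMem2 0 (-1) 0 ?_ ?_ <;>
          simp only [posC, Sum.elim_inl, Sum.elim_inr, tpos, L_pt] <;> linarith
      · refine notMem2 0 (-1) 0 ?_ ?_ <;>
          simp only [posC, Sum.elim_inl, Sum.elim_inr, tpos, L_pt] <;> linarith
      · refine notMem3 0 (-1) 0 ?_ ?_ <;>
          simp only [posC, Sum.elim_inl, Sum.elim_inr, tpos, L_pt] <;> linarith
      · refine notMem3 0 (-1) 0 ?_ ?_ <;>
          simp only [posC, Sum.elim_inl, Sum.elim_inr, tpos, L_pt] <;> linarith
      all_goals refine notMem3' 0 1 0 ?_ ?_ <;>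
        simp only [posC, Sum.elim_inl, Sum.elim_inr, tpos, L_pt] <;> linarith
    · refine notMem2' 0 1 0 ?_ ?_ <;>
        simp only [posC, Sum.elim_inl, Sum.elim_inr, tpos, L_pt] <;> linarith
  -- S1 edge
  · rcases w with t | m
    · fin_cases t
      · refine notMem2 0 (-1) 0 ?_ ?_ <;>
          simp only [posC, Sum.elim_inl, Sum.elim_inr, tpos, L_pt] <;> linarith
      · refine notMem2 0 (-1) 0 ?_ ?_ <;>
          simp only [posC, Sum.elim_inl, Sum.elim_inr, tpos, L_pt] <;> linarith
      · refine notMem3 0 (-1) 0 ?_ ?_ <;>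
          simp only [posC, Sum.elim_inl, Sum.elim_inr, tpos, L_pt] <;> linarith
      · refine notMem3 0 (-1) 0 ?_ ?_ <;>
          simp only [posC, Sum.elim_inl, Sum.elim_inr, tpos, L_pt] <;> linarith
      all_goals refine notMem3' 0 1 0 ?_ ?_ <;>
        simp only [posC, Sum.elim_inl, Sum.elim_inr, tpos, L_pt] <;> linarith
    · refine notMem2' 0 1 0 ?_ ?_ <;>
        simp only [posC, Sum.elim_inl, Sum.elim_inr, tpos, L_pt] <;> linarith
  -- B2 edge
  · rcases w with t | m
    · fin_cases t
      · refine notMem3 0 1 0 ?_ ?_ <;>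
          simp only [posC, Sum.elim_inl, Sum.elim_inr, tpos, L_pt] <;> linarith
      · refine notMem3 0 1 0 ?_ ?_ <;>
          simp only [posC, Sum.elim_inl, Sum.elim_inr, tpos, L_pt] <;> linarith
      · refine notMem3' 0 (-1) 0 ?_ ?_ <;>
          simp only [posC, Sum.elim_inl, Sum.elim_inr, tpos, L_pt] <;> linarith
      · -- w = t3, the delicate case
        have hiv : (i:ℕ) = 0 ∨ (i:ℕ) = 1 ∨ (i:ℕ) = 2 ∨ (i:ℕ) = 3 := by omega
        rcases hiv with hiv | hiv | hiv | hiv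
        · have e1 : ((i:ℕ):ℝ) = 0 := by rw [hiv]; norm_num
          refine notMem1 (-6) (-1) 0 ?_ ?_ <;>
            simp only [posC, Sum.elim_inl, Sum.elim_inr, tpos, L_pt] <;> linarith
        · have e1 : ((i:ℕ):ℝ) = 1 := by rw [hiv]; norm_num
          refine notMem1 6 (-1) (-6) ?_ ?_ <;>
            simp only [posC, Sum.elim_inl, Sum.elim_inr, tpos, L_pt] <;> linarith
        · have e1 : ((i:ℕ):ℝ) = 2 := by rw [hiv]; norm_num
          refine notMem1 2 (-1) (-4) ?_ ?_ <;>
            simp only [posC, Sum.elim_inl, Sum.elim_inr, tpos, L_pt] <;> linarith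
        · have e1 : ((i:ℕ):ℝ) = 3 := by rw [hiv]; norm_num
          refine notMem1 6 (-5) (-18) ?_ ?_ <;>
            simp only [posC, Sum.elim_inl, Sum.elim_inr, tpos, L_pt] <;> linarith
      all_goals refine notMem3 0 1 0 ?_ ?_ <;>
        simp only [posC, Sum.elim_inl, Sum.elim_inr, tpos, L_pt] <;> linarith
    · refine notMem3 0 1 0 ?_ ?_ <;>
        simp only [posC, Sum.elim_inl, Sum.elim_inr, tpos, L_pt] <;> linarith
  -- B3 edge
  · rcases w with t | m
    · fin_cases t
      · refine notMem3 0 1 0 ?_ ?_ <;>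
          simp only [posC, Sum.elim_inl, Sum.elim_inr, tpos, L_pt] <;> linarith
      · refine notMem3 0 1 0 ?_ ?_ <;>
          simp only [posC, Sum.elim_inl, Sum.elim_inr, tpos, L_pt] <;> linarith
      · refine notMem3' 0 (-1) 0 ?_ ?_ <;>
          simp only [posC, Sum.elim_inl, Sum.elim_inr, tpos, L_pt] <;> linarith
      · refine notMem3' 0 (-1) 0 ?_ ?_ <;>
          simp only [posC, Sum.elim_inl, Sum.elim_inr, tpos, L_pt] <;> linarith
      all_goals refine notMem3 0 1 0 ?_ ?_ <;>
        simp only [posC, Sum.elim_inl, Sum.elim_inr, tpos, L_pt] <;> linarith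
    · refine notMem3 0 1 0 ?_ ?_ <;>
        simp only [posC, Sum.elim_inl, Sum.elim_inr, tpos, L_pt] <;> linarith

lemma posC_inj {h : ℕ} (hpos : 0 < h) : Function.Injective (posC h) := by
  have hh : (1:ℝ) ≤ (h:ℝ) := by exact_mod_cast hpos
  intro u v huv
  rcases u with a | i <;> rcases v with b | j
  · fin_cases a <;> fin_cases b <;> first
      | rfl
      | (exfalso; obtain ⟨h1, h2⟩ := pt_inj huv; first | linarith | norm_num at h1 h2)
  · exfalso; fin_cases a <;> (obtain ⟨h1, h2⟩ := pt_inj huv; norm_num at h2)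
  · exfalso; fin_cases b <;> (obtain ⟨h1, h2⟩ := pt_inj huv; norm_num at h2)
  · obtain ⟨h1, h2⟩ := pt_inj huv
    exact congrArg Sum.inr (Fin.ext (Nat.cast_injective h1))

lemma planarSL {h : ℕ} (hpos : 0 < h) :
    IsPlanarSL (combinedGraph GTdef (GBdef h) (Edef h hpos)) := by
  refine ⟨posC h, posC_inj hpos, ?_, ?_⟩
  · intro a b c d hab hcd hne
    rcases adj_cases hab with h1 | h1 <;> rcases adj_cases hcd with h2 | h2
    · exact cross hpos h1 h2 hne
    · rw [openSegment_symm ℝ (posC h c) (posC h d)]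
      exact cross hpos h1 h2 (by rw [Set.pair_comm d c]; exact hne)
    · rw [openSegment_symm ℝ (posC h a) (posC h b)]
      exact cross hpos h1 h2 (by rw [Set.pair_comm b a]; exact hne)
    · rw [openSegment_symm ℝ (posC h a) (posC h b), openSegment_symm ℝ (posC h c) (posC h d)]
      exact cross hpos h1 h2 (by rw [Set.pair_comm b a, Set.pair_comm d c]; exact hne)
  · intro a b w hab
    rcases adj_cases hab with h1 | h1
    · exact noVertex hpos h1 w
    · rw [openSegment_symm]; exact noVertex hpos h1 w

lemma Edef_card {h : ℕ} (hpos : 0 < h) : (Edef h hpos).card = 4*h + 6 := by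
  rw [Edef, Finset.card_union_of_disjoint]
  · rw [Finset.card_image_of_injective _ (fun i j hij => (Prod.ext_iff.mp hij).2),
      Finset.card_univ, Fintype.card_fin]
    have e6 : ({(2, (⟨0, by omega⟩ : Fin (4*h))), (2, ⟨1, by omega⟩), (2, ⟨2, by omega⟩),
        (2, ⟨3, by omega⟩), (3, ⟨0, by omega⟩), (3, ⟨1, by omega⟩)} :
        Finset (Fin 7 × Fin (4*h))).card = 6 := by
      rw [Finset.card_insert_of_notMem (by simp [Prod.ext_iff, Fin.ext_iff] <;> decide),
        Finset.card_insert_of_notMem (by simp [Prod.ext_iff, Fin.ext_iff] <;> decide),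
        Finset.card_insert_of_notMem (by simp [Prod.ext_iff, Fin.ext_iff] <;> decide),
        Finset.card_insert_of_notMem (by simp [Prod.ext_iff, Fin.ext_iff] <;> decide),
        Finset.card_insert_of_notMem (by simp [Prod.ext_iff, Fin.ext_iff] <;> decide),
        Finset.card_singleton]
    rw [e6]
  · rw [Finset.disjoint_left]
    rintro ⟨a, b⟩ hmem hmem'
    simp only [Finset.mem_image, Finset.mem_univ, true_and, Prod.mk.injEq] at hmem
    obtain ⟨i, hi1, rfl⟩ := hmem
    simp only [Finset.mem_insert, Finset.mem_singleton, Prod.mk.injEq] at hmem'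
    rcases hmem' with ⟨ha, -⟩ | ⟨ha, -⟩ | ⟨ha, -⟩ | ⟨ha, -⟩ | ⟨ha, -⟩ | ⟨ha, -⟩ <;>
      (subst ha; split at hi1 <;> exact absurd hi1 (by decide))

lemma count_bound {h : ℕ} (hpos : 0 < h) (IT : Finset (Fin 7)) (IB : Finset (Fin (4*h)))
    (hIT : IsIndepSet GTdef IT) (hIB : IsIndepSet (GBdef h) IB) :
    ((Edef h hpos).filter (fun e => e.1 ∈ IT ∧ e.2 ∈ IB)).card ≤ h + 6 := by
  classical
  rw [Edef, Finset.filter_union]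
  refine le_trans (Finset.card_union_le _ _) (add_le_add ?_ ?_)
  · -- bulk part
    rw [Finset.filter_image]
    refine le_trans Finset.card_image_le ?_
    refine le_trans ?_ (le_of_eq (Finset.card_range h))
    by_cases h0 : (0:Fin 7) ∈ IT <;> by_cases h1 : (1:Fin 7) ∈ IT
    · exact absurd (GT_adj.mpr ⟨by decide, Or.inl ⟨rfl, rfl⟩⟩) (hIT _ h0 _ h1)
    · refine Finset.card_le_card_of_injOn (fun i => (i:ℕ)/2) ?_ ?_
      · intro a ha
        simp only [Finset.mem_coe, Finset.mem_filter, Finset.mem_univ, true_and] at ha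
        obtain ⟨ha1, ha2⟩ := ha
        have hlt : (a:ℕ) < 2*h := by
          by_contra hc
          rw [if_neg hc] at ha1; exact h1 ha1
        simp only [Finset.mem_coe, Finset.mem_range]; omega
      · intro a ha b hb hab
        simp only [Finset.mem_coe, Finset.mem_filter, Finset.mem_univ, true_and] at ha hb
        by_contra hne2
        exact hIB _ ha.2 _ hb.2 (GB_adj.mpr ⟨hne2, hab⟩)
    · refine Finset.card_le_card_of_injOn (fun i => (i:ℕ)/2 - h) ?_ ?_
      · intro a ha
        simp only [Finset.mem_coe, Finset.mem_filter, Finset.mem_univ, true_and] at ha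
        obtain ⟨ha1, ha2⟩ := ha
        have hge : ¬ (a:ℕ) < 2*h := by
          intro hc
          rw [if_pos hc] at ha1; exact h0 ha1
        have := a.isLt
        simp only [Finset.mem_coe, Finset.mem_range]; omega
      · intro a ha b hb hab
        simp only [Finset.mem_coe, Finset.mem_filter, Finset.mem_univ, true_and] at ha hb
        have hga : ¬ (a:ℕ) < 2*h := by
          intro hc; rw [if_pos hc] at ha; exact h0 ha.1
        have hgb : ¬ (b:ℕ) < 2*h := by
          intro hc; rw [if_pos hc] at hb; exact h0 hb.1
        have hab' : (a:ℕ)/2 - h = (b:ℕ)/2 - h := hab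
        have hdiv : (a:ℕ)/2 = (b:ℕ)/2 := by omega
        by_contra hne2
        exact hIB _ ha.2 _ hb.2 (GB_adj.mpr ⟨hne2, hdiv⟩)
    · rw [Finset.filter_eq_empty_iff.mpr ?_]
      · simp
      · intro a _
        rintro ⟨ha1, -⟩
        split at ha1
        · exact h0 ha1
        · exact h1 ha1
  · exact le_trans (Finset.card_filter_le _ _) (by
      refine le_trans (Finset.card_insert_le _ _) ?_
      refine le_trans (Nat.add_le_add_right (Finset.card_insert_le _ _) 1) ?_
      refine le_trans (Nat.add_le_add_right (Nat.add_le_add_right (Finset.card_insert_le _ _) 1) 1) ?_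
      refine le_trans (Nat.add_le_add_right (Nat.add_le_add_right (Nat.add_le_add_right (Finset.card_insert_le _ _) 1) 1) 1) ?_
      refine le_trans (Nat.add_le_add_right (Nat.add_le_add_right (Nat.add_le_add_right (Nat.add_le_add_right (Finset.card_insert_le _ _) 1) 1) 1) 1) ?_
      simp)


/-- For every `h > 0` there is a planar bipartite adjacency instance,
with a top side of `7` vertices and a bottom side of `4h` vertices, having `4h + 6`
external adjacency edges, whose internal adjacency graphs are outerplanar, such that every
valid selection (an independent set in the internal adjacency graph of each side) preserves
at most `h + 6` external adjacency edges — i.e. at most a `1/4 + o(1)` fraction. -/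
theorem upper_bound_quarter (h : ℕ) (hpos : 0 < h) :
    ∃ (GT : SimpleGraph (Fin 7)) (GB : SimpleGraph (Fin (4 * h)))
      (E : Finset (Fin 7 × Fin (4 * h))),
      IsOuterplanar GT ∧ IsOuterplanar GB ∧
      IsPlanarSL (combinedGraph GT GB E) ∧
      E.card = 4 * h + 6 ∧
      ∀ (IT : Finset (Fin 7)) (IB : Finset (Fin (4 * h))),
        IsIndepSet GT IT → IsIndepSet GB IB →
        (E.filter (fun e => e.1 ∈ IT ∧ e.2 ∈ IB)).card ≤ h + 6 := by
  exact ⟨GTdef, GBdef h, Edef h hpos, GT_outer, GB_outer h, planarSL hpos, Edef_card hpos,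
    fun IT IB hIT hIB => count_bound hpos IT IB hIT hIB⟩
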